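/- Let A, B be nonempty subsets of a normed space X and T a p-cyclic φ-contraction mapping. Let (x₀,y₀) ∈ A × B, x_n = T(x_{n-1}, y_{n-1}), y_n = T(y_{n-1}, x_{n-1}). If the sequence {(x_{2n}, y_{2n})} has a subsequence converging to some (x,y) ∈ A × B, then ‖x − T(x,y)‖ = dist(A,B) and ‖y − T(y,x)‖ = dist(A,B), i.e., (x,y) is a coupled best proximity point of T. -/
import Mathlib


open Filter Topology

/-- `setDist A B = inf {‖a - b‖ : a ∈ A, b ∈ B}`. -/
noncomputable def setDist {X : Type*} [NormedAddCommGroup X] (A B : Set X) : ℝ :=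
  sInf {d : ℝ | ∃ a ∈ A, ∃ b ∈ B, d = ‖a - b‖}

theorem stmt4 {X : Type*} [NormedAddCommGroup X] [NormedSpace ℝ X]
    (A B : Set X) (hA : A.Nonempty) (hB : B.Nonempty)
    (T : X → X → X) (φ : ℝ → ℝ)
    (hφmono : StrictMonoOn φ (Set.Ici 0)) (hφpos : ∀ t ≥ (0:ℝ), 0 ≤ φ t)
    (hTB : ∀ x ∈ A, ∀ y ∈ B, T x y ∈ B)
    (hTA : ∀ x ∈ B, ∀ y ∈ A, T x y ∈ A)
    (hT : ∀ x₁ ∈ A, ∀ y₁ ∈ B, ∀ x₂ ∈ B, ∀ y₂ ∈ A,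
      ‖T x₁ y₁ - T x₂ y₂‖ ≤ ‖((x₁, y₁) : X × X) - (x₂, y₂)‖
        - φ ‖((x₁, y₁) : X × X) - (x₂, y₂)‖ + φ (setDist A B))
    (x y : ℕ → X) (hx0 : x 0 ∈ A) (hy0 : y 0 ∈ B)
    (hx : ∀ n, x (n + 1) = T (x n) (y n))
    (hy : ∀ n, y (n + 1) = T (y n) (x n))
    (k : ℕ → ℕ) (hk : StrictMono k) (x' y' : X) (hx' : x' ∈ A) (hy' : y' ∈ B)
    (hconv : Tendsto (fun i : ℕ => ((x (2 * k i), y (2 * k i)) : X × X))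
      atTop (𝓝 (x', y'))) :
    ‖x' - T x' y'‖ = setDist A B ∧ ‖y' - T y' x'‖ = setDist A B := by
  classical
  set d := setDist A B with hd_def
  have hSne : {r : ℝ | ∃ a ∈ A, ∃ b ∈ B, r = ‖a - b‖}.Nonempty := by
    obtain ⟨a, ha⟩ := hA; obtain ⟨b, hb⟩ := hB
    exact ⟨‖a - b‖, a, ha, b, hb, rfl⟩
  have hSbdd : BddBelow {r : ℝ | ∃ a ∈ A, ∃ b ∈ B, r = ‖a - b‖} := by
    refine ⟨0, fun r hr => ?_⟩
    obtain ⟨a, -, b, -, rfl⟩ := hr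
    exact norm_nonneg _
  have hd_le : ∀ a ∈ A, ∀ b ∈ B, d ≤ ‖a - b‖ := fun a ha b hb =>
    csInf_le hSbdd ⟨a, ha, b, hb, rfl⟩
  have hd0 : 0 ≤ d := le_csInf hSne (by rintro r ⟨a, -, b, -, rfl⟩; exact norm_nonneg _)
  have hφle : ∀ s t : ℝ, 0 ≤ s → s ≤ t → φ s ≤ φ t := fun s t hs hst =>
    hφmono.monotoneOn (Set.mem_Ici.mpr hs) (Set.mem_Ici.mpr (hs.trans hst)) hst
  -- memberships by parity
  have hmem : ∀ n : ℕ, (Even n → x n ∈ A ∧ y n ∈ B) ∧ (¬ Even n → x n ∈ B ∧ y n ∈ A) := by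
    intro n
    induction n with
    | zero => exact ⟨fun _ => ⟨hx0, hy0⟩, fun h => absurd Even.zero h⟩
    | succ n ih =>
      constructor
      · intro he
        have hn : ¬ Even n := (Nat.even_add_one.mp he)
        obtain ⟨hxB, hyA⟩ := ih.2 hn
        rw [hx n, hy n]
        exact ⟨hTA _ hxB _ hyA, hTB _ hyA _ hxB⟩
      · intro ho
        have hn : Even n := by
          by_contra hcon
          exact ho (Nat.even_add_one.mpr hcon)
        obtain ⟨hxA, hyB⟩ := ih.1 hn
        rw [hx n, hy n]
        exact ⟨hTB _ hxA _ hyB, hTA _ hyB _ hxA⟩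
  -- key contraction inequality in max form
  have key : ∀ a ∈ A, ∀ b ∈ B, ∀ a' ∈ B, ∀ b' ∈ A,
      ‖T a b - T a' b'‖ ≤ max ‖a - a'‖ ‖b - b'‖ - φ (max ‖a - a'‖ ‖b - b'‖) + φ d := by
    intro a ha b hb a' ha' b' hb'
    have h := hT a ha b hb a' ha' b' hb'
    rw [Prod.mk_sub_mk, Prod.norm_def] at h
    exact h
  have key2 : ∀ a ∈ A, ∀ b ∈ B, ∀ a' ∈ B, ∀ b' ∈ A,
      ‖T a b - T a' b'‖ ≤ max ‖a - a'‖ ‖b - b'‖ := by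
    intro a ha b hb a' ha' b' hb'
    have h1 := key a ha b hb a' ha' b' hb'
    have h2 : d ≤ max ‖a - a'‖ ‖b - b'‖ :=
      le_trans (hd_le a ha a' ha') (le_max_left _ _)
    have h3 := hφle d _ hd0 h2
    linarith
  set c : ℕ → ℝ := fun n => max ‖x (n + 1) - x n‖ ‖y (n + 1) - y n‖ with hc_def
  have hdc : ∀ n, d ≤ c n := by
    intro n
    rcases Nat.even_or_odd n with he | ho
    · have h1 := (hmem n).1 he
      have h2 := (hmem (n + 1)).2 (by simpa [Nat.even_add_one] using he)
      have : d ≤ ‖x n - x (n + 1)‖ := hd_le _ h1.1 _ h2.1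
      rw [norm_sub_rev] at this
      exact this.trans (le_max_left _ _)
    · have h1 := (hmem n).2 (Nat.not_even_iff_odd.mpr ho)
      have h2 := (hmem (n + 1)).1 (Nat.even_add_one.mpr (Nat.not_even_iff_odd.mpr ho))
      have : d ≤ ‖x (n + 1) - x n‖ := hd_le _ h2.1 _ h1.1
      exact this.trans (le_max_left _ _)
  have hc0 : ∀ n, 0 ≤ c n := fun n => le_trans hd0 (hdc n)
  -- one-step contraction for c
  have hstep : ∀ n, c (n + 1) ≤ c n - φ (c n) + φ d := by
    intro n
    have hcn : c n = max ‖x (n + 1) - x n‖ ‖y (n + 1) - y n‖ := rfl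
    rcases Nat.even_or_odd n with he | ho
    · have h1 := (hmem n).1 he
      have h2 := (hmem (n + 1)).2 (by simpa [Nat.even_add_one] using he)
      -- x (n+2) = T (x (n+1)) (y (n+1)), x (n+1) = T (x n) (y n)
      have hx1 : ‖x (n + 1 + 1) - x (n + 1)‖ ≤ c n - φ (c n) + φ d := by
        have h := key (x n) h1.1 (y n) h1.2 (x (n + 1)) h2.1 (y (n + 1)) h2.2
        rw [← hx n, ← hx (n + 1), norm_sub_rev] at h
        have hmax : max ‖x n - x (n + 1)‖ ‖y n - y (n + 1)‖ = c n := by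
          rw [hcn, norm_sub_rev (x n), norm_sub_rev (y n)]
        rw [hmax] at h
        exact h
      have hy1 : ‖y (n + 1 + 1) - y (n + 1)‖ ≤ c n - φ (c n) + φ d := by
        have h := key (y (n + 1)) h2.2 (x (n + 1)) h2.1 (y n) h1.2 (x n) h1.1
        rw [← hy n, ← hy (n + 1)] at h
        have hmax : max ‖y (n + 1) - y n‖ ‖x (n + 1) - x n‖ = c n := by
          rw [hcn, max_comm]
        rw [hmax] at h
        exact h
      exact max_le hx1 hy1
    · have h1 := (hmem n).2 (Nat.not_even_iff_odd.mpr ho)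
      have h2 := (hmem (n + 1)).1 (Nat.even_add_one.mpr (Nat.not_even_iff_odd.mpr ho))
      have hx1 : ‖x (n + 1 + 1) - x (n + 1)‖ ≤ c n - φ (c n) + φ d := by
        have h := key (x (n + 1)) h2.1 (y (n + 1)) h2.2 (x n) h1.1 (y n) h1.2
        rw [← hx n, ← hx (n + 1)] at h
        have hmax : max ‖x (n + 1) - x n‖ ‖y (n + 1) - y n‖ = c n := hcn.symm
        rw [hmax] at h
        exact h
      have hy1 : ‖y (n + 1 + 1) - y (n + 1)‖ ≤ c n - φ (c n) + φ d := by
        have h := key (y n) h1.2 (x n) h1.1 (y (n + 1)) h2.2 (x (n + 1)) h2.1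
        rw [← hy n, ← hy (n + 1), norm_sub_rev] at h
        have hmax : max ‖y n - y (n + 1)‖ ‖x n - x (n + 1)‖ = c n := by
          rw [hcn, max_comm, norm_sub_rev (y n), norm_sub_rev (x n)]
        rw [hmax] at h
        exact h
      exact max_le hx1 hy1
  have hmono : ∀ n, c (n + 1) ≤ c n := by
    intro n
    have h1 := hstep n
    have h2 := hφle d (c n) hd0 (hdc n)
    linarith
  have hanti : Antitone c := antitone_nat_of_succ_le hmono
  have hbdd : BddBelow (Set.range c) := ⟨d, by rintro r ⟨n, rfl⟩; exact hdc n⟩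
  set L := ⨅ n, c n with hL_def
  have hcL : Tendsto c atTop (𝓝 L) := tendsto_atTop_ciInf hanti hbdd
  have hdL : d ≤ L := le_ciInf hdc
  have hLd : L ≤ d := by
    by_contra hcon
    push_neg at hcon
    have hφLd : φ d < φ L :=
      hφmono (Set.mem_Ici.mpr hd0) (Set.mem_Ici.mpr (hd0.trans hcon.le)) hcon
    have hε : 0 < φ L - φ d := sub_pos.mpr hφLd
    have hLle : ∀ n, L ≤ c n := fun n => ciInf_le hbdd n
    have hdec : ∀ n, c (n + 1) ≤ c n - (φ L - φ d) := by
      intro n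
      have h1 := hstep n
      have h2 : φ L ≤ φ (c n) := hφle L (c n) (hd0.trans hdL) (hLle n)
      linarith
    have hsum : ∀ n : ℕ, c n ≤ c 0 - n * (φ L - φ d) := by
      intro n
      induction n with
      | zero => simp
      | succ n ih =>
        have h1 := hdec n
        push_cast
        push_cast at ih
        linarith
    obtain ⟨n, hn⟩ := exists_nat_gt ((c 0 - d) / (φ L - φ d))
    rw [div_lt_iff₀ hε] at hn
    have h1 := hsum n
    have h2 := hdc n
    linarith
  have hcd : Tendsto c atTop (𝓝 d) := by
    rw [le_antisymm hLd hdL] at hcL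
    exact hcL
  -- convergence of the subsequence components
  have hE : Tendsto (fun i => max ‖x' - x (2 * k i)‖ ‖y' - y (2 * k i)‖) atTop (𝓝 0) := by
    have h := tendsto_iff_norm_sub_tendsto_zero.mp hconv
    refine h.congr (fun i => ?_)
    rw [Prod.mk_sub_mk, Prod.norm_def]
    simp only
    rw [norm_sub_rev (x (2 * k i)), norm_sub_rev (y (2 * k i))]
  have hC : Tendsto (fun i => c (2 * k i - 1)) atTop (𝓝 d) := by
    refine hcd.comp (tendsto_atTop_mono (fun i => ?_) tendsto_id)
    have := hk.le_apply (x := i)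
    simp only [id_eq]
    omega
  have hBnd : Tendsto
      (fun i => 2 * (max ‖x' - x (2 * k i)‖ ‖y' - y (2 * k i)‖) + c (2 * k i - 1))
      atTop (𝓝 d) := by
    have := (hE.const_mul 2).add hC
    simpa using this
  -- the eventual upper bound
  have hub : ∀ i : ℕ, 1 ≤ i →
      ‖x' - T x' y'‖ ≤ 2 * (max ‖x' - x (2 * k i)‖ ‖y' - y (2 * k i)‖) + c (2 * k i - 1) ∧
      ‖y' - T y' x'‖ ≤ 2 * (max ‖x' - x (2 * k i)‖ ‖y' - y (2 * k i)‖) + c (2 * k i - 1) := by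
    intro i hi
    have hki : 1 ≤ k i := le_trans hi hk.le_apply
    set n := 2 * k i with hn_def
    set m := 2 * k i - 1 with hm_def
    have hm1 : m + 1 = n := by omega
    have hneven : Even n := even_two_mul _
    have hmodd : ¬ Even m := by
      intro hcon
      have : Even (m + 1) := hm1 ▸ hneven
      exact (Nat.even_add_one.mp this) hcon
    obtain ⟨hxmB, hymA⟩ := (hmem m).2 hmodd
    have hxn : x n = T (x m) (y m) := by rw [← hm1, hx m]
    have hyn : y n = T (y m) (x m) := by rw [← hm1, hy m]
    set E := max ‖x' - x n‖ ‖y' - y n‖ with hE_def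
    have hcm : c m = max ‖x n - x m‖ ‖y n - y m‖ := by
      rw [hc_def]; simp only; rw [hm1]
    have hME : max ‖x' - x m‖ ‖y' - y m‖ ≤ E + c m := by
      rw [hcm]
      refine max_le ?_ ?_
      · calc ‖x' - x m‖ ≤ ‖x' - x n‖ + ‖x n - x m‖ :=
              norm_sub_le_norm_sub_add_norm_sub _ _ _
          _ ≤ E + max ‖x n - x m‖ ‖y n - y m‖ :=
              add_le_add (le_max_left _ _) (le_max_left _ _)
      · calc ‖y' - y m‖ ≤ ‖y' - y n‖ + ‖y n - y m‖ :=
              norm_sub_le_norm_sub_add_norm_sub _ _ _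
          _ ≤ E + max ‖x n - x m‖ ‖y n - y m‖ :=
              add_le_add (le_max_right _ _) (le_max_right _ _)
    constructor
    · have h1 : ‖T x' y' - x n‖ ≤ max ‖x' - x m‖ ‖y' - y m‖ := by
        rw [hxn]
        exact key2 x' hx' y' hy' (x m) hxmB (y m) hymA
      calc ‖x' - T x' y'‖ ≤ ‖x' - x n‖ + ‖x n - T x' y'‖ :=
            norm_sub_le_norm_sub_add_norm_sub _ _ _
        _ = ‖x' - x n‖ + ‖T x' y' - x n‖ := by rw [norm_sub_rev (x n)]
        _ ≤ E + (E + c m) := add_le_add (le_max_left _ _) (h1.trans hME)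
        _ = 2 * E + c m := by ring
    · have h1 : ‖y n - T y' x'‖ ≤ max ‖x' - x m‖ ‖y' - y m‖ := by
        rw [hyn]
        have h := key2 (y m) hymA (x m) hxmB y' hy' x' hx'
        calc ‖T (y m) (x m) - T y' x'‖ ≤ max ‖y m - y'‖ ‖x m - x'‖ := h
          _ = max ‖x' - x m‖ ‖y' - y m‖ := by
              rw [norm_sub_rev (y m), norm_sub_rev (x m), max_comm]
      calc ‖y' - T y' x'‖ ≤ ‖y' - y n‖ + ‖y n - T y' x'‖ :=
            norm_sub_le_norm_sub_add_norm_sub _ _ _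
        _ ≤ E + (E + c m) := add_le_add (le_max_right _ _) (h1.trans hME)
        _ = 2 * E + c m := by ring
  have hxup : ‖x' - T x' y'‖ ≤ d :=
    ge_of_tendsto hBnd (eventually_atTop.mpr ⟨1, fun i hi => (hub i hi).1⟩)
  have hyup : ‖y' - T y' x'‖ ≤ d :=
    ge_of_tendsto hBnd (eventually_atTop.mpr ⟨1, fun i hi => (hub i hi).2⟩)
  have hxlo : d ≤ ‖x' - T x' y'‖ := hd_le x' hx' _ (hTB x' hx' y' hy')
  have hylo : d ≤ ‖y' - T y' x'‖ := by
    have := hd_le _ (hTA y' hy' x' hx') y' hy'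
    rwa [norm_sub_rev] at this
  exact ⟨le_antisymm hxup hxlo, le_antisymm hyup hylo⟩
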